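/- arXiv:2509.09035 — 3 statements merged into one kernel-verified Lean document; each statement's English description precedes it below -/
import Mathlib

section
/- Let L, C, c ≥ 0 with c ≥ L(L+C)+C, let G and G′ be graphs, let G contain a graph H as a c-fat minor, and suppose there is an (L,C)-quasi-isometry from G to G′. Then G′ contains H as a minor. -/
open SimpleGraph

/-- The distance in `G` between two sets of vertices, as an extended natural
(`⊤` if no path exists). -/
noncomputable def setDist {V : Type} (G : SimpleGraph V) (X Y : Set V) : ℕ∞ :=
  ⨅ (x : X) (y : Y), G.edist x.1 y.1

/-- Incidence on `U(H) = V(H) ⊕ E(H)`: a vertex and an edge incident with it. -/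
def UIncident {W : Type} (H : SimpleGraph W) : (W ⊕ H.edgeSet) → (W ⊕ H.edgeSet) → Prop
  | Sum.inl v, Sum.inr e => v ∈ (e : Sym2 W)
  | Sum.inr e, Sum.inl v => v ∈ (e : Sym2 W)
  | _, _ => False

/-- `η` exhibits `H` as a `c`-fat minor of `G`. -/
def IsFatMinorVia {V W : Type} (G : SimpleGraph V) (H : SimpleGraph W) (c : ℕ)
    (η : (W ⊕ H.edgeSet) → Set V) : Prop :=
  (∀ x, (η x).Nonempty) ∧
  (∀ x, (G.induce (η x)).Connected) ∧
  (Pairwise fun x y => Disjoint (η x) (η y)) ∧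
  (∀ e : H.edgeSet, ∀ v : W, v ∈ (e : Sym2 W) →
    ∃ a ∈ η (Sum.inl v), ∃ b ∈ η (Sum.inr e), G.Adj a b) ∧
  (∀ x y, x ≠ y → ¬ UIncident H x y → (c : ℕ∞) < setDist G (η x) (η y))

/-- `G` contains `H` as a `c`-fat minor. -/
def HasFatMinor {V W : Type} (G : SimpleGraph V) (H : SimpleGraph W) (c : ℕ) : Prop :=
  ∃ η, IsFatMinorVia G H c η

/-- `G` contains `H` as a minor. -/
def HasMinor {V W : Type} (G : SimpleGraph V) (H : SimpleGraph W) : Prop :=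
  ∃ η : W → Set V, (∀ v, (η v).Nonempty) ∧ (∀ v, (G.induce (η v)).Connected) ∧
    (Pairwise fun u v => Disjoint (η u) (η v)) ∧
    ∀ u v, H.Adj u v → ∃ a ∈ η u, ∃ b ∈ η v, G.Adj a b

/-- `φ` is an `(L,C)`-quasi-isometry from `G` to `H`. -/
def QuasiIsometry {V W : Type} (G : SimpleGraph V) (H : SimpleGraph W) (L C : ℕ)
    (φ : V → W) : Prop :=
  (∀ u v, G.edist u v ≠ ⊤ → H.edist (φ u) (φ v) ≤ L * G.edist u v + C) ∧
  (∀ u v, H.edist (φ u) (φ v) ≠ ⊤ → G.edist u v ≤ L * H.edist (φ u) (φ v) + C) ∧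
  (∀ y, ∃ v, H.edist (φ v) y ≤ C)

section AuxWalk
variable {V : Type} {G : SimpleGraph V}

/-- Two vertices are linked by a walk whose support stays inside `s`. -/
def LinkedIn (G : SimpleGraph V) (s : Set V) (a b : V) : Prop :=
  ∃ p : G.Walk a b, ∀ x ∈ p.support, x ∈ s

lemma linkedIn_refl {s : Set V} {a : V} (ha : a ∈ s) : LinkedIn G s a a :=
  ⟨Walk.nil, by simpa using ha⟩

lemma linkedIn_symm {s : Set V} {a b : V} (h : LinkedIn G s a b) : LinkedIn G s b a := by
  obtain ⟨p, hp⟩ := h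
  exact ⟨p.reverse, fun x hx => hp x (by simpa [Walk.support_reverse] using hx)⟩

lemma linkedIn_trans {s : Set V} {a b c : V} (h1 : LinkedIn G s a b) (h2 : LinkedIn G s b c) :
    LinkedIn G s a c := by
  obtain ⟨p, hp⟩ := h1
  obtain ⟨q, hq⟩ := h2
  refine ⟨p.append q, fun x hx => ?_⟩
  rcases (Walk.mem_support_append_iff _ _).1 hx with h | h
  · exact hp x h
  · exact hq x h

lemma linkedIn_mono {s t : Set V} {a b : V} (hst : s ⊆ t) (h : LinkedIn G s a b) :
    LinkedIn G t a b := by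
  obtain ⟨p, hp⟩ := h
  exact ⟨p, fun x hx => hst (hp x hx)⟩

lemma reachable_induce_of_walk {s : Set V} :
    ∀ {a b : V} (p : G.Walk a b), (∀ x ∈ p.support, x ∈ s) →
      ∀ (ha : a ∈ s) (hb : b ∈ s), (G.induce s).Reachable ⟨a, ha⟩ ⟨b, hb⟩ := by
  intro a b p
  induction p with
  | nil => intro _ ha hb; rfl
  | @cons a a' b h q ih =>
    intro hsup ha hb
    have ha' : a' ∈ s := hsup a' (by simp)
    have hadj : (G.induce s).Adj ⟨a, ha⟩ ⟨a', ha'⟩ := by simpa using h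
    exact hadj.reachable.trans (ih (fun x hx => hsup x (by simp [hx])) ha' hb)

lemma connected_induce_of_linkedIn {s : Set V} (hne : s.Nonempty)
    (h : ∀ a ∈ s, ∀ b ∈ s, LinkedIn G s a b) : (G.induce s).Connected := by
  rw [connected_iff]
  refine ⟨fun x y => ?_, ⟨⟨hne.choose, hne.choose_spec⟩⟩⟩
  obtain ⟨a, ha⟩ := x
  obtain ⟨b, hb⟩ := y
  obtain ⟨p, hp⟩ := h a ha b hb
  exact reachable_induce_of_walk p hp ha hb

lemma exists_walk_of_induce_walk {s : Set V} :
    ∀ {x y : ↑s} (_ : (G.induce s).Walk x y), ∃ p : G.Walk x.1 y.1, ∀ z ∈ p.support, z ∈ s := by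
  intro x y q
  induction q with
  | nil => exact ⟨Walk.nil, by simpa using x.2⟩
  | @cons x x' y h q ih =>
    obtain ⟨p, hp⟩ := ih
    refine ⟨Walk.cons (by simpa using h) p, fun z hz => ?_⟩
    rcases List.mem_cons.1 (by simpa [Walk.support_cons] using hz) with rfl | hz'
    · exact x.2
    · exact hp z hz'

lemma exists_walk_of_induce_connected {s : Set V} (h : (G.induce s).Connected)
    {a b : V} (ha : a ∈ s) (hb : b ∈ s) :
    ∃ p : G.Walk a b, ∀ x ∈ p.support, x ∈ s := by
  obtain ⟨q⟩ := h.preconnected ⟨a, ha⟩ ⟨b, hb⟩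
  exact exists_walk_of_induce_walk q

lemma edist_getVert_le {a b : V} (p : G.Walk a b) (i : ℕ) :
    G.edist a (p.getVert i) ≤ (i : ℕ∞) := by
  induction p generalizing i with
  | nil => simp [Walk.getVert, SimpleGraph.edist_self]
  | @cons a a' b h q ih =>
    cases i with
    | zero => simp [Walk.getVert_zero, SimpleGraph.edist_self]
    | succ n =>
      rw [Walk.getVert_cons_succ]
      calc G.edist a (q.getVert n) ≤ G.edist a a' + G.edist a' (q.getVert n) :=
            SimpleGraph.edist_triangle
        _ ≤ 1 + (n : ℕ∞) := add_le_add (by simpa using edist_le h.toWalk) (ih n)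
        _ = ((n + 1 : ℕ) : ℕ∞) := by push_cast; ring

lemma edist_getVert_right {a b : V} (p : G.Walk a b) (i : ℕ) :
    G.edist (p.getVert i) b ≤ ((p.length - i : ℕ) : ℕ∞) := by
  induction p generalizing i with
  | nil => simp [Walk.getVert, SimpleGraph.edist_self]
  | @cons a a' b h q ih =>
    cases i with
    | zero =>
      rw [Walk.getVert_zero]
      simpa using edist_le (Walk.cons h q)
    | succ n =>
      rw [Walk.getVert_cons_succ]
      simpa [Walk.length_cons, Nat.succ_sub_succ] using ih n

lemma image_walk {V V' : Type} {G : SimpleGraph V} {G' : SimpleGraph V'} {φ : V → V'} {r : ℕ}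
    (hadj : ∀ a b : V, G.Adj a b → G'.edist (φ a) (φ b) ≤ (r : ℕ∞))
    {a b : V} (p : G.Walk a b) : ∃ q : G'.Walk (φ a) (φ b),
      ∀ z ∈ q.support, ∃ t ∈ p.support, G'.edist (φ t) z ≤ ((r / 2 : ℕ) : ℕ∞) := by
  induction p with
  | @nil a =>
    refine ⟨Walk.nil, fun z hz => ⟨a, by simp, ?_⟩⟩
    simp only [Walk.support_nil, List.mem_singleton] at hz
    simp [hz, SimpleGraph.edist_self]
  | @cons a a' b h p ih =>
    obtain ⟨q', hq'⟩ := ih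
    have hd : G'.edist (φ a) (φ a') ≤ (r : ℕ∞) := hadj _ _ h
    have hne : G'.edist (φ a) (φ a') ≠ ⊤ := ne_top_of_le_ne_top (ENat.coe_ne_top r) hd
    obtain ⟨w, hw⟩ := exists_walk_of_edist_ne_top hne
    have hwlen : w.length ≤ r := by
      have : (w.length : ℕ∞) ≤ (r : ℕ∞) := by rw [hw]; exact hd
      exact_mod_cast this
    refine ⟨w.append q', fun z hz => ?_⟩
    rcases (Walk.mem_support_append_iff _ _).1 hz with hzw | hzq
    · obtain ⟨i, hgi, hile⟩ := Walk.mem_support_iff_exists_getVert.1 hzw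
      by_cases hi : i ≤ r / 2
      · refine ⟨a, by simp, ?_⟩
        rw [← hgi]
        exact (edist_getVert_le w i).trans (by exact_mod_cast hi)
      · refine ⟨a', by simp, ?_⟩
        rw [← hgi, SimpleGraph.edist_comm]
        refine (edist_getVert_right w i).trans ?_
        have hsub : w.length - i ≤ r / 2 := by omega
        exact_mod_cast hsub
    · obtain ⟨t, ht, htz⟩ := hq' z hzq
      exact ⟨t, by simp [ht], htz⟩

end AuxWalk

/-- if `c ≥ L(L+C)+C`, `G` contains `H` as a `c`-fat minor, and there is
an `(L,C)`-quasi-isometry from `G` to `G'`, then `G'` contains `H` as a minor. -/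
theorem fatMinor_quasiIsometry_minor {V V' U : Type} (L C c : ℕ)
    (hc : L * (L + C) + C ≤ c)
    (G : SimpleGraph V) (G' : SimpleGraph V') (H : SimpleGraph U)
    (hfat : HasFatMinor G H c) (φ : V → V') (hφ : QuasiIsometry G G' L C φ) :
    HasMinor G' H := by
  classical
  obtain ⟨η, hne, hconn, hdisj, hatt, hfar⟩ := hfat
  obtain ⟨hφ1, hφ2, -⟩ := hφ
  set r : ℕ := L + C with hrdef
  -- adjacent vertices have close images
  have key0 : ∀ a b : V, G.Adj a b → G'.edist (φ a) (φ b) ≤ (r : ℕ∞) := by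
    intro a b hab
    have h1 : G.edist a b ≤ 1 := by simpa using edist_le hab.toWalk
    have hnt : G.edist a b ≠ ⊤ := ne_top_of_le_ne_top (by simp) h1
    calc G'.edist (φ a) (φ b) ≤ L * G.edist a b + C := hφ1 a b hnt
      _ ≤ L * 1 + C := add_le_add_left (mul_le_mul_right h1 _) _
      _ ≤ ((L + C : ℕ) : ℕ∞) := by push_cast; simp [mul_one]
  -- far pieces have far images
  have key1 : ∀ x y : U ⊕ H.edgeSet, x ≠ y → ¬ UIncident H x y →
      ∀ a ∈ η x, ∀ b ∈ η y, ¬ G'.edist (φ a) (φ b) ≤ (r : ℕ∞) := by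
    intro x y hxy hinc a ha b hb hle
    have hnt : G'.edist (φ a) (φ b) ≠ ⊤ := ne_top_of_le_ne_top (ENat.coe_ne_top r) hle
    have h2 : G.edist a b ≤ (L : ℕ∞) * r + C :=
      (hφ2 a b hnt).trans (add_le_add_left (mul_le_mul_right hle _) _)
    have h3 : G.edist a b ≤ (c : ℕ∞) := by
      refine h2.trans ?_
      have hcc : ((L * (L + C) + C : ℕ) : ℕ∞) ≤ (c : ℕ∞) := by exact_mod_cast hc
      calc (L : ℕ∞) * r + C = ((L * (L + C) + C : ℕ) : ℕ∞) := by rw [hrdef]; push_cast; ring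
        _ ≤ (c : ℕ∞) := hcc
    have h4 : setDist G (η x) (η y) ≤ (c : ℕ∞) := by
      refine le_trans ?_ h3
      have step : (⨅ (p : η x) (q : η y), G.edist p.1 q.1) ≤ G.edist a b :=
        iInf₂_le (f := fun (p : η x) (q : η y) => G.edist p.1 q.1) (⟨a, ha⟩ : η x) (⟨b, hb⟩ : η y)
      exact step
    exact absurd (hfar x y hxy hinc) (not_lt.2 h4)
  have hhalf : ((r / 2 : ℕ) : ℕ∞) + ((r / 2 : ℕ) : ℕ∞) ≤ (r : ℕ∞) := by
    exact_mod_cast (by omega : r / 2 + r / 2 ≤ r)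
  -- two points of far pieces cannot be half-close to a common point
  have hfar2 : ∀ x y : U ⊕ H.edgeSet, x ≠ y → ¬ UIncident H x y →
      ∀ a ∈ η x, ∀ b ∈ η y, ∀ z : V',
      G'.edist (φ a) z ≤ ((r / 2 : ℕ) : ℕ∞) → G'.edist (φ b) z ≤ ((r / 2 : ℕ) : ℕ∞) → False := by
    intro x y hxy hinc a ha b hb z h1 h2
    refine key1 x y hxy hinc a ha b hb ?_
    calc G'.edist (φ a) (φ b) ≤ G'.edist (φ a) z + G'.edist z (φ b) := SimpleGraph.edist_triangle
      _ ≤ ((r / 2 : ℕ) : ℕ∞) + ((r / 2 : ℕ) : ℕ∞) := by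
          refine add_le_add h1 ?_
          rwa [SimpleGraph.edist_comm]
      _ ≤ (r : ℕ∞) := hhalf
  have hinc_ll : ∀ w w' : U, ¬ UIncident H (Sum.inl w) (Sum.inl w') := fun _ _ h => h
  have hinc_rr : ∀ e f : H.edgeSet, ¬ UIncident H (Sum.inr e) (Sum.inr f) := fun _ _ h => h
  -- the half-balls around vertex branch sets
  set μ0 : U → Set V' :=
    fun w => {y | ∃ a ∈ η (Sum.inl w), G'.edist (φ a) y ≤ ((r / 2 : ℕ) : ℕ∞)} with hμ0
  have hμ0mem : ∀ w : U, ∀ a ∈ η (Sum.inl w), φ a ∈ μ0 w := by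
    intro w a ha
    exact ⟨a, ha, by simp [SimpleGraph.edist_self]⟩
  have hμ0disj : ∀ w w' : U, w ≠ w' → ∀ y, y ∈ μ0 w → y ∈ μ0 w' → False := by
    rintro w w' hww' y ⟨a, ha, hay⟩ ⟨b, hb, hby⟩
    exact hfar2 (Sum.inl w) (Sum.inl w') (fun h => hww' (Sum.inl_injective h)) (hinc_ll _ _)
      a ha b hb y hay hby
  -- the corridor construction for each edge of `H`
  have corridor : ∀ e : H.edgeSet, ∃ (u₁ u₂ : U) (P : Set V'),
      (e : Sym2 U) = s(u₁, u₂) ∧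
      (∀ y ∈ P, ∃ t, (t ∈ η (Sum.inl u₁) ∨ t ∈ η (Sum.inr e) ∨ t ∈ η (Sum.inl u₂)) ∧
        G'.edist (φ t) y ≤ ((r / 2 : ℕ) : ℕ∞)) ∧
      (∀ y ∈ P, y ∉ μ0 u₂) ∧
      (∃ a ∈ P, ∃ b ∈ μ0 u₂, G'.Adj a b) ∧
      (∃ z, z ∈ μ0 u₁ ∧ z ∈ P ∧ ∀ y ∈ P, LinkedIn G' P y z) := by
    intro e
    obtain ⟨u₁, u₂, hu⟩ : ∃ u₁ u₂, (e : Sym2 U) = s(u₁, u₂) :=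
      Sym2.ind (fun x y => ⟨x, y, rfl⟩) (e : Sym2 U)
    have hadj12 : H.Adj u₁ u₂ := H.mem_edgeSet.1 (hu ▸ e.2)
    have hne12 : u₁ ≠ u₂ := hadj12.ne
    have hm1 : u₁ ∈ (e : Sym2 U) := by rw [hu]; exact Sym2.mem_mk_left _ _
    have hm2 : u₂ ∈ (e : Sym2 U) := by rw [hu]; exact Sym2.mem_mk_right _ _
    obtain ⟨a₁, ha₁, b₁, hb₁, hab₁⟩ := hatt e u₁ hm1
    obtain ⟨a₂, ha₂, b₂, hb₂, hab₂⟩ := hatt e u₂ hm2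
    obtain ⟨p₀, hp₀⟩ := exists_walk_of_induce_connected (hconn (Sum.inr e)) hb₁ hb₂
    set R : G.Walk a₁ a₂ := Walk.cons hab₁ (p₀.concat hab₂.symm) with hR
    have hRsup : ∀ t ∈ R.support,
        t ∈ η (Sum.inl u₁) ∨ t ∈ η (Sum.inr e) ∨ t ∈ η (Sum.inl u₂) := by
      intro t ht
      rw [hR, Walk.support_cons] at ht
      rcases List.mem_cons.1 ht with rfl | ht'
      · exact Or.inl ha₁
      · rw [Walk.support_concat] at ht'
        simp only [List.concat_eq_append, List.mem_append, List.mem_singleton] at ht'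
        rcases ht' with ht'' | rfl
        · exact Or.inr (Or.inl (hp₀ t ht''))
        · exact Or.inr (Or.inr ha₂)
    obtain ⟨Ω, hΩ⟩ := image_walk key0 R
    have hΩnear : ∀ z ∈ Ω.support, ∃ t,
        (t ∈ η (Sum.inl u₁) ∨ t ∈ η (Sum.inr e) ∨ t ∈ η (Sum.inl u₂)) ∧
        G'.edist (φ t) z ≤ ((r / 2 : ℕ) : ℕ∞) := by
      intro z hz
      obtain ⟨t, htR, htz⟩ := hΩ z hz
      exact ⟨t, hRsup t htR, htz⟩
    have hstart : φ a₁ ∉ μ0 u₂ := by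
      rintro ⟨t, ht, htd⟩
      exact hfar2 (Sum.inl u₂) (Sum.inl u₁) (fun h => hne12 (Sum.inl_injective h).symm)
        (hinc_ll _ _) t ht a₁ ha₁ (φ a₁) htd (by simp [SimpleGraph.edist_self])
    have hJex : ∃ i, Ω.getVert i ∈ μ0 u₂ :=
      ⟨Ω.length, by rw [Walk.getVert_length]; exact hμ0mem u₂ a₂ ha₂⟩
    set j := Nat.find hJex with hjdef
    have hjspec : Ω.getVert j ∈ μ0 u₂ := Nat.find_spec hJex
    have hjmin : ∀ i, i < j → Ω.getVert i ∉ μ0 u₂ := fun i hi => Nat.find_min hJex hi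
    have hj0 : 0 < j := by
      rcases Nat.eq_zero_or_pos j with h | h
      swap
      · exact h
      · exfalso
        apply hstart
        rw [← Walk.getVert_zero Ω, ← h]
        exact hjspec
    have hjle : j ≤ Ω.length :=
      Nat.find_le (by rw [Walk.getVert_length]; exact hμ0mem u₂ a₂ ha₂)
    set P : Set V' := {y | ∃ i, i < j ∧ Ω.getVert i = y} with hP
    have hPsup : ∀ y ∈ P, y ∈ Ω.support := by
      rintro y ⟨i, hij, rfl⟩
      exact Walk.mem_support_iff_exists_getVert.2 ⟨i, rfl, by omega⟩
    refine ⟨u₁, u₂, P, hu, ?_, ?_, ?_, ?_⟩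
    · intro y hy
      exact hΩnear y (hPsup y hy)
    · rintro y ⟨i, hij, rfl⟩
      exact hjmin i hij
    · refine ⟨Ω.getVert (j - 1), ⟨j - 1, by omega, rfl⟩, Ω.getVert j, hjspec, ?_⟩
      have hadj' := Ω.adj_getVert_succ (i := j - 1) (by omega)
      have hj1 : j - 1 + 1 = j := by omega
      rwa [hj1] at hadj'
    · have hz0 : φ a₁ ∈ P := ⟨0, hj0, Walk.getVert_zero Ω⟩
      refine ⟨φ a₁, hμ0mem u₁ a₁ ha₁, hz0, ?_⟩
      have claim : ∀ i, i < j → LinkedIn G' P (Ω.getVert i) (φ a₁) := by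
        intro i
        induction i with
        | zero => intro _; rw [Walk.getVert_zero]; exact linkedIn_refl hz0
        | succ n ihn =>
          intro hn
          have hadj' : G'.Adj (Ω.getVert (n + 1)) (Ω.getVert n) :=
            (Ω.adj_getVert_succ (by omega)).symm
          have step : LinkedIn G' P (Ω.getVert (n + 1)) (Ω.getVert n) := by
            refine ⟨hadj'.toWalk, fun x hx => ?_⟩
            rcases (by simpa [Adj.toWalk] using hx :
                x = Ω.getVert (n + 1) ∨ x = Ω.getVert n) with rfl | rfl
            · exact ⟨n + 1, hn, rfl⟩
            · exact ⟨n, by omega, rfl⟩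
          exact linkedIn_trans step (ihn (by omega))
      rintro y ⟨i, hij, rfl⟩
      exact claim i hij
  choose u₁ u₂ P hu hPnear hPdis hPadj hPconn using corridor
  set μ : U → Set V' := fun w => μ0 w ∪ {y | ∃ e, u₁ e = w ∧ y ∈ P e} with hμ
  have hPsubμ : ∀ e : H.edgeSet, P e ⊆ μ (u₁ e) := fun e y hy => Or.inr ⟨e, rfl, hy⟩
  have hμ0subμ : ∀ w, μ0 w ⊆ μ w := fun w y hy => Or.inl hy
  -- non-incidence of `inr e` with `inl z` when z is not an endpoint
  have hinc_rl : ∀ (e : H.edgeSet) (z : U), z ≠ u₁ e → z ≠ u₂ e →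
      ¬ UIncident H (Sum.inr e) (Sum.inl z) := by
    intro e z h1 h2 hmem
    have hz : z ∈ (e : Sym2 U) := hmem
    rw [hu e, Sym2.mem_iff] at hz
    tauto
  -- the key separation lemma
  have LEM1 : ∀ (e : H.edgeSet) (z : U), z ≠ u₁ e → ∀ y ∈ P e, y ∉ μ0 z := by
    intro e z hz y hyP hyμ
    by_cases hz2 : z = u₂ e
    · exact hPdis e y hyP (hz2 ▸ hyμ)
    · obtain ⟨t, ht, hty⟩ := hPnear e y hyP
      obtain ⟨bz, hbz, hbzy⟩ := hyμ
      rcases ht with h1 | h1 | h1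
      · exact hfar2 (Sum.inl (u₁ e)) (Sum.inl z)
          (fun h => hz (Sum.inl_injective h).symm) (hinc_ll _ _) t h1 bz hbz y hty hbzy
      · exact hfar2 (Sum.inr e) (Sum.inl z) (fun h => by cases h)
          (hinc_rl e z hz hz2) t h1 bz hbz y hty hbzy
      · exact hfar2 (Sum.inl (u₂ e)) (Sum.inl z)
          (fun h => hz2 (Sum.inl_injective h).symm) (hinc_ll _ _) t h1 bz hbz y hty hbzy
  -- disjointness
  have hμdisj : Pairwise fun w w' => Disjoint (μ w) (μ w') := by
    intro w w' hww'
    rw [Set.disjoint_left]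
    rintro y (hy | ⟨e, he, hyP⟩) hy'
    · rcases hy' with hy' | ⟨f, hf, hyP'⟩
      · exact hμ0disj w w' hww' y hy hy'
      · exact LEM1 f w (fun h => hww' (h ▸ hf)) y hyP' hy
    · rcases hy' with hy' | ⟨f, hf, hyP'⟩
      · exact LEM1 e w' (fun h => hww' ((h ▸ he : w' = w).symm)) y hyP hy'
      · -- both corridor prefixes
        have hef : e ≠ f := fun h => hww' (by rw [← he, ← hf, h])
        have key : ∀ z : U, y ∈ μ0 z → False := by
          intro z hz
          have h1 : z = u₁ e := by
            by_contra hne'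
            exact LEM1 e z hne' y hyP hz
          have h2 : z = u₁ f := by
            by_contra hne'
            exact LEM1 f z hne' y hyP' hz
          exact hww' (by rw [← he, ← hf, ← h1, ← h2])
        obtain ⟨s', hs', hsy⟩ := hPnear e y hyP
        obtain ⟨t', ht', hty⟩ := hPnear f y hyP'
        rcases hs' with hA | hB | hC
        · exact key (u₁ e) ⟨s', hA, hsy⟩
        · rcases ht' with hA' | hB' | hC'
          · exact key (u₁ f) ⟨t', hA', hty⟩
          · refine hfar2 (Sum.inr e) (Sum.inr f) ?_ (hinc_rr _ _) s' hB t' hB' y hsy hty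
            intro h
            exact hef (Sum.inr_injective h)
          · exact key (u₂ f) ⟨t', hC', hty⟩
        · exact key (u₂ e) ⟨s', hC, hsy⟩
  -- connectivity
  have hAimg : ∀ w : U, ∀ a ∈ η (Sum.inl w), ∀ a' ∈ η (Sum.inl w),
      LinkedIn G' (μ0 w) (φ a) (φ a') := by
    intro w a ha a' ha'
    obtain ⟨p, hp⟩ := exists_walk_of_induce_connected (hconn (Sum.inl w)) ha ha'
    obtain ⟨q, hq⟩ := image_walk key0 p
    refine ⟨q, fun z hz => ?_⟩
    obtain ⟨t, htp, htz⟩ := hq z hz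
    exact ⟨t, hp t htp, htz⟩
  have hanchor : ∀ w : U, ∀ y ∈ μ0 w, ∃ a ∈ η (Sum.inl w), LinkedIn G' (μ0 w) y (φ a) := by
    rintro w y ⟨a, ha, hay⟩
    refine ⟨a, ha, linkedIn_symm ?_⟩
    have hnt : G'.edist (φ a) y ≠ ⊤ := ne_top_of_le_ne_top (ENat.coe_ne_top _) hay
    obtain ⟨q, hq⟩ := exists_walk_of_edist_ne_top hnt
    refine ⟨q, fun z hz => ?_⟩
    obtain ⟨i, hgi, hile⟩ := Walk.mem_support_iff_exists_getVert.1 hz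
    refine ⟨a, ha, ?_⟩
    rw [← hgi]
    refine (edist_getVert_le q i).trans ?_
    calc (i : ℕ∞) ≤ (q.length : ℕ∞) := by exact_mod_cast hile
      _ = G'.edist (φ a) y := hq
      _ ≤ ((r / 2 : ℕ) : ℕ∞) := hay
  have hμ0linked : ∀ w : U, ∀ y ∈ μ0 w, ∀ y' ∈ μ0 w, LinkedIn G' (μ0 w) y y' := by
    intro w y hy y' hy'
    obtain ⟨a, ha, hla⟩ := hanchor w y hy
    obtain ⟨a', ha', hla'⟩ := hanchor w y' hy'
    exact linkedIn_trans hla (linkedIn_trans (hAimg w a ha a' ha') (linkedIn_symm hla'))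
  have hμconn : ∀ w, (G'.induce (μ w)).Connected := by
    intro w
    apply connected_induce_of_linkedIn
    · obtain ⟨a, ha⟩ := hne (Sum.inl w)
      exact ⟨φ a, hμ0subμ w (hμ0mem w a ha)⟩
    · have toμ0 : ∀ y ∈ μ w, ∃ y' ∈ μ0 w, LinkedIn G' (μ w) y y' := by
        rintro y (hy | ⟨e, he, hyP⟩)
        · exact ⟨y, hy, linkedIn_refl (hμ0subμ w hy)⟩
        · obtain ⟨z, hz, hzP, hlink⟩ := hPconn e
          refine ⟨z, he ▸ hz, ?_⟩
          have := hlink y hyP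
          exact linkedIn_mono (fun x hx => he ▸ hPsubμ e hx) this
      intro a ha b hb
      obtain ⟨a', ha', hla⟩ := toμ0 a ha
      obtain ⟨b', hb', hlb⟩ := toμ0 b hb
      exact linkedIn_trans hla (linkedIn_trans
        (linkedIn_mono (hμ0subμ w) (hμ0linked w a' ha' b' hb')) (linkedIn_symm hlb))
  -- adjacency
  have hμadj : ∀ u v, H.Adj u v → ∃ a ∈ μ u, ∃ b ∈ μ v, G'.Adj a b := by
    intro u v huv
    set e : H.edgeSet := ⟨s(u, v), H.mem_edgeSet.2 huv⟩ with he
    have heq : s(u, v) = s(u₁ e, u₂ e) := hu e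
    obtain ⟨a, haP, b, hbμ, hab⟩ := hPadj e
    rcases Sym2.eq_iff.1 heq with ⟨h1, h2⟩ | ⟨h1, h2⟩
    · exact ⟨a, h1 ▸ hPsubμ e haP, b, h2 ▸ hμ0subμ _ hbμ, hab⟩
    · exact ⟨b, h1 ▸ hμ0subμ _ hbμ, a, h2 ▸ hPsubμ e haP, hab.symm⟩
  refine ⟨μ, ?_, hμconn, hμdisj, hμadj⟩
  intro v
  obtain ⟨a, ha⟩ := hne (Sum.inl v)
  exact ⟨φ a, hμ0subμ v (hμ0mem v a ha)⟩
end

section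
/- Let G be a graph and let 𝒜 be a set of pairwise disjoint nonempty subsets of V(G), with union W, such that each A ∈ 𝒜 has quasi-bound at most (a,b). Suppose also that there is a line-decomposition of G[W] in which each bag is the union of at most k members of 𝒜. Then W has quasi-line-width at most ((k+1)a, b). -/
open SimpleGraph

/-- `X ⊆ V(G)` has quasi-size at most `(k,r)`: some set `Y` of at most `k` vertices has
every vertex of `X` within distance `r` of it (distances in `G`). -/
def QuasiSize {V : Type} (G : SimpleGraph V) (X : Set V) (k r : ℕ) : Prop :=
  ∃ Y : Set V, Y.encard ≤ k ∧ ∀ x ∈ X, ∃ y ∈ Y, G.edist x y ≤ r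

/-- `X ⊆ V(G)` has quasi-line-width at most `(k,r)`: the induced subgraph `G[X]` admits a
line-decomposition each of whose bags has quasi-size at most `(k,r)` in `G`. -/
def QuasiLineWidth {V : Type} (G : SimpleGraph V) (X : Set V) (k r : ℕ) : Prop :=
  ∃ (T : Type) (_ : LinearOrder T) (B : T → Set V),
    (∀ t, B t ⊆ X) ∧
    (∀ v ∈ X, ∃ t, v ∈ B t) ∧
    (∀ u v, u ∈ X → v ∈ X → G.Adj u v → ∃ t, u ∈ B t ∧ v ∈ B t) ∧
    (∀ t₁ t₂ t₃ : T, t₁ < t₂ → t₂ < t₃ → B t₁ ∩ B t₃ ⊆ B t₂) ∧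
    (∀ t, QuasiSize G (B t) k r)

/-- The boundary of `X`: the vertices of `X` with a neighbour outside `X`. -/
def bd {V : Type} (G : SimpleGraph V) (X : Set V) : Set V :=
  {v | v ∈ X ∧ ∃ u, u ∉ X ∧ G.Adj v u}

/-- `X` has quasi-bound at most `(a,b)`: quasi-line-width at most `(a,b)` and the boundary
of `X` has quasi-size at most `(a,b)`. -/
def QuasiBound {V : Type} (G : SimpleGraph V) (X : Set V) (a b : ℕ) : Prop :=
  QuasiLineWidth G X a b ∧ QuasiSize G (bd G X) a b

lemma encard_biUnion_le_aux {α β : Type*} {a : ℕ} {S : Set α} (hS : S.Finite) (f : α → Set β)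
    (hf : ∀ A ∈ S, (f A).encard ≤ a) : (⋃ A ∈ S, f A).encard ≤ S.encard * a := by
  revert hf
  refine Set.Finite.induction_on (motive := fun s _ =>
    (∀ A ∈ s, (f A).encard ≤ a) → (⋃ A ∈ s, f A).encard ≤ s.encard * a) S hS (by simp) ?_
  intro A S hA hSfin ih hf
  rw [Set.biUnion_insert, Set.encard_insert_of_notMem hA]
  calc (f A ∪ ⋃ x ∈ S, f x).encard ≤ (f A).encard + (⋃ x ∈ S, f x).encard :=
        Set.encard_union_le _ _
    _ ≤ a + S.encard * a := add_le_add (hf A (Set.mem_insert _ _))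
        (ih fun x hx => hf x (Set.mem_insert_of_mem _ hx))
    _ = (S.encard + 1) * a := by ring

lemma sigma_lex_between {ι : Type*} [LinearOrder ι] {α : ι → Type*} [∀ i, LinearOrder (α i)]
    {i : ι} {s1 s3 : α i} {q : Σₗ (j : ι), α j}
    (h1 : toLex ⟨i, s1⟩ < q) (h3 : q < toLex ⟨i, s3⟩) :
    ∃ s2 : α i, q = toLex ⟨i, s2⟩ ∧ s1 < s2 ∧ s2 < s3 := by
  obtain ⟨j, s⟩ := q
  change Sigma.Lex _ _ _ _ at h1 h3
  cases h1 with
  | left _ _ hij =>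
    cases h3 with
    | left _ _ hji => exact absurd (hij.trans hji) (lt_irrefl i)
    | right _ _ _ => exact absurd hij (lt_irrefl i)
  | right _ _ hs1 =>
    cases h3 with
    | left _ _ hji => exact absurd hji (lt_irrefl i)
    | right _ _ hs3 => exact ⟨_, rfl, hs1, hs3⟩

/-- A wrapper with no order instances, so that a choice well-order on it cannot clash
with pre-existing order instances. -/
structure OWrap (α : Type) : Type where
  down : α

/-- composing line-decompositions.  If `𝒜` is a set of pairwise disjoint
nonempty subsets of `V(G)` with union `W`, each of quasi-bound at most `(a,b)`, and `G[W]`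
has a line-decomposition each of whose bags is the union of at most `k` members of `𝒜`,
then `W` has quasi-line-width at most `((k+1)a, b)`. -/
theorem composeLineDecompositions {V : Type} (G : SimpleGraph V)
    (𝒜 : Set (Set V)) (W : Set V) (a b k : ℕ)
    (hdisj : 𝒜.Pairwise fun A A' => Disjoint A A')
    (hne : ∀ A ∈ 𝒜, A.Nonempty)
    (hunion : ⋃₀ 𝒜 = W)
    (hqb : ∀ A ∈ 𝒜, QuasiBound G A a b)
    (hdec : ∃ (T : Type) (_ : LinearOrder T) (B : T → Set V),
      (∀ t, B t ⊆ W) ∧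
      (∀ v ∈ W, ∃ t, v ∈ B t) ∧
      (∀ u v, u ∈ W → v ∈ W → G.Adj u v → ∃ t, u ∈ B t ∧ v ∈ B t) ∧
      (∀ t₁ t₂ t₃ : T, t₁ < t₂ → t₂ < t₃ → B t₁ ∩ B t₃ ⊆ B t₂) ∧
      (∀ t, ∃ S ⊆ 𝒜, S.encard ≤ k ∧ B t = ⋃₀ S)) :
    QuasiLineWidth G W ((k + 1) * a) b := by
  classical
  obtain ⟨T, _ord, B, hBsub, hBcov, hBedge, hBconv, hBk⟩ := hdec
  choose S hS𝒜 hSk hSB using hBk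
  have huniq : ∀ {A A' : Set V} {x : V}, A ∈ 𝒜 → A' ∈ 𝒜 → x ∈ A → x ∈ A' → A = A' := by
    intro A A' x hA hA' hxA hxA'
    by_contra hne'
    exact (hdisj hA hA' hne').ne_of_mem hxA hxA' rfl
  have hAW : ∀ {A : Set V}, A ∈ 𝒜 → A ⊆ W := by
    intro A hA; rw [← hunion]; exact Set.subset_sUnion_of_mem hA
  -- per-member data
  choose TA ordA CA hC using fun A : ↥𝒜 => (hqb A.1 A.2).1
  letI := ordA
  choose YC hYC1 hYC2 using fun (A : ↥𝒜) (s : TA A) => (hC A).2.2.2.2 s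
  choose Yb hYb1 hYb2 using fun A : ↥𝒜 => (hqb A.1 A.2).2
  -- anchor
  have hanch : ∀ A : ↥𝒜, ∃ t, (A : Set V) ∈ S t := by
    intro A
    obtain ⟨x, hx⟩ := hne A.1 A.2
    obtain ⟨t, ht⟩ := hBcov x (hAW A.2 hx)
    rw [hSB t] at ht
    obtain ⟨A', hA', hxA'⟩ := ht
    exact ⟨t, by rwa [huniq (hS𝒜 t hA') A.2 hxA' hx] at hA'⟩
  choose anc hanc using hanch
  -- convexity of the trace of each member
  have hIconv : ∀ (A : Set V), A ∈ 𝒜 → ∀ {t1 t2 t3 : T}, t1 ≤ t2 → t2 ≤ t3 →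
      A ∈ S t1 → A ∈ S t3 → A ∈ S t2 := by
    intro A hA t1 t2 t3 h12 h23 h1 h3
    rcases h12.lt_or_eq with l12 | rfl
    · rcases h23.lt_or_eq with l23 | rfl
      · have hsub1 : A ⊆ B t1 := by rw [hSB t1]; exact Set.subset_sUnion_of_mem h1
        have hsub3 : A ⊆ B t3 := by rw [hSB t3]; exact Set.subset_sUnion_of_mem h3
        obtain ⟨x, hx⟩ := hne A hA
        have hxB : x ∈ B t2 := hBconv t1 t2 t3 l12 l23 ⟨hsub1 hx, hsub3 hx⟩
        rw [hSB t2] at hxB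
        obtain ⟨A', hA', hxA'⟩ := hxB
        rwa [huniq (hS𝒜 t2 hA') hA hxA' hx] at hA'
      · exact h3
    · exact h1
  letI : LinearOrder (OWrap ↥𝒜) := @linearOrderOfSTO _ WellOrderingRel _ (Classical.decRel _)
  set U : T → Set V := fun t => ⋃ A ∈ S t, bd G A with hUdef
  have hUmem : ∀ {v : V} {t : T}, v ∈ U t ↔ ∃ A ∈ S t, v ∈ bd G A := by
    intro v t; simp [hUdef]
  set T' := T ×ₗ WithBot (Σₗ (q : OWrap ↥𝒜), TA q.down) with hT'def
  set Bag : T' → Set V := fun x => U (ofLex x).1 ∪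
      ⋃ (p : Σ (q : OWrap ↥𝒜), TA q.down)
        (_ : (ofLex x).2 = ((toLex p : Σₗ (q : OWrap ↥𝒜), TA q.down) : WithBot (Σₗ (q : OWrap ↥𝒜), TA q.down)))
        (_ : (ofLex x).1 = anc p.1.down), CA p.1.down p.2 with hBagdef
  have hBagMem : ∀ (x : T') (v : V), v ∈ Bag x ↔ (v ∈ U (ofLex x).1 ∨
      ∃ p : Σ (q : OWrap ↥𝒜), TA q.down,
        (ofLex x).2 = ((toLex p : Σₗ (q : OWrap ↥𝒜), TA q.down) : WithBot (Σₗ (q : OWrap ↥𝒜), TA q.down)) ∧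
        (ofLex x).1 = anc p.1.down ∧ v ∈ CA p.1.down p.2) := by
    intro x v
    simp only [hBagdef, Set.mem_union, Set.mem_iUnion]
    tauto
  have hlex : ∀ {x y : T'}, x < y →
      (ofLex x).1 < (ofLex y).1 ∨ ((ofLex x).1 = (ofLex y).1 ∧ (ofLex x).2 < (ofLex y).2) := by
    intro x y h
    exact Prod.Lex.lt_iff.mp h
  refine ⟨T', inferInstance, Bag, ?_, ?_, ?_, ?_, ?_⟩
  · -- bags inside W
    intro x v hv
    rw [hBagMem] at hv
    rcases hv with hv | ⟨p, _, _, hv⟩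
    · obtain ⟨A, hAS, hvb⟩ := hUmem.mp hv
      exact hAW (hS𝒜 _ hAS) hvb.1
    · exact hAW p.1.down.2 ((hC p.1.down).1 p.2 hv)
  · -- cover vertices
    intro v hv
    rw [← hunion] at hv
    obtain ⟨A, hA, hvA⟩ := hv
    obtain ⟨s, hs⟩ := (hC ⟨A, hA⟩).2.1 v hvA
    refine ⟨toLex (anc ⟨A, hA⟩,
      ((toLex ⟨⟨⟨A, hA⟩⟩, s⟩ : Σₗ (q : OWrap ↥𝒜), TA q.down) : WithBot (Σₗ (q : OWrap ↥𝒜), TA q.down))), ?_⟩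
    rw [hBagMem]
    exact Or.inr ⟨⟨⟨⟨A, hA⟩⟩, s⟩, rfl, rfl, hs⟩
  · -- cover edges
    intro u v hu hv hadj
    have hu' := hu; have hv' := hv
    rw [← hunion] at hu' hv'
    obtain ⟨A, hA, huA⟩ := hu'
    obtain ⟨A2, hA2, hvA2⟩ := hv'
    by_cases hAA : A = A2
    · subst hAA
      obtain ⟨s, hus, hvs⟩ := (hC ⟨A, hA⟩).2.2.1 u v huA hvA2 hadj
      refine ⟨toLex (anc ⟨A, hA⟩,
        ((toLex ⟨⟨⟨A, hA⟩⟩, s⟩ : Σₗ (q : OWrap ↥𝒜), TA q.down) : WithBot (Σₗ (q : OWrap ↥𝒜), TA q.down))), ?_, ?_⟩ <;>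
        rw [hBagMem]
      · exact Or.inr ⟨⟨⟨⟨A, hA⟩⟩, s⟩, rfl, rfl, hus⟩
      · exact Or.inr ⟨⟨⟨⟨A, hA⟩⟩, s⟩, rfl, rfl, hvs⟩
    · have hvnA : v ∉ A := fun hvA => hAA (huniq hA hA2 hvA hvA2)
      have hunA2 : u ∉ A2 := fun huA2 => hAA (huniq hA hA2 huA huA2)
      have hub : u ∈ bd G A := ⟨huA, v, hvnA, hadj⟩
      have hvb : v ∈ bd G A2 := ⟨hvA2, u, hunA2, hadj.symm⟩
      obtain ⟨t, hut, hvt⟩ := hBedge u v hu hv hadj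
      rw [hSB t] at hut hvt
      obtain ⟨A', hA', huA'⟩ := hut
      obtain ⟨A2', hA2', hvA2'⟩ := hvt
      have e1 : A' = A := huniq (hS𝒜 t hA') hA huA' huA
      have e2 : A2' = A2 := huniq (hS𝒜 t hA2') hA2 hvA2' hvA2
      refine ⟨toLex (t, (⊥ : WithBot (Σₗ (q : OWrap ↥𝒜), TA q.down))), ?_, ?_⟩ <;> rw [hBagMem]
      · exact Or.inl (hUmem.mpr ⟨A, e1 ▸ hA', hub⟩)
      · exact Or.inl (hUmem.mpr ⟨A2, e2 ▸ hA2', hvb⟩)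
  · -- convexity
    intro x1 x2 x3 h12 h23 v hv
    obtain ⟨hv1, hv3⟩ := hv
    rw [hBagMem] at hv1 hv3 ⊢
    have ht12 : (ofLex x1).1 ≤ (ofLex x2).1 := by
      rcases hlex (x:=x1) (y:=x2) (by exact h12) with h | ⟨h, _⟩; exacts [h.le, h.le]
    have ht23 : (ofLex x2).1 ≤ (ofLex x3).1 := by
      rcases hlex (x:=x2) (y:=x3) (by exact h23) with h | ⟨h, _⟩; exacts [h.le, h.le]
    -- a helper for the boundary route
    have bdroute : ∀ (A : Set V), A ∈ 𝒜 → v ∈ bd G A →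
        A ∈ S (ofLex x1).1 → A ∈ S (ofLex x3).1 →
        v ∈ U (ofLex x2).1 := fun A hA hvb h1 h3 =>
      hUmem.mpr ⟨A, hIconv A hA ht12 ht23 h1 h3, hvb⟩
    rcases hv1 with hv1 | ⟨p1, ho1, hta1, hvC1⟩
    · obtain ⟨A1, hA1S, hvb1⟩ := hUmem.mp hv1
      rcases hv3 with hv3 | ⟨p3, ho3, hta3, hvC3⟩
      · obtain ⟨A3, hA3S, hvb3⟩ := hUmem.mp hv3
        rw [show A3 = A1 from huniq (hS𝒜 _ hA3S) (hS𝒜 _ hA1S) hvb3.1 hvb1.1] at hA3S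
        exact Or.inl (bdroute A1 (hS𝒜 _ hA1S) hvb1 hA1S hA3S)
      · -- (U, C)
        have hvA3 : v ∈ (p3.1.down : Set V) := (hC p3.1.down).1 p3.2 hvC3
        have e : A1 = (p3.1.down : Set V) := huniq (hS𝒜 _ hA1S) p3.1.down.2 hvb1.1 hvA3
        have h3S : A1 ∈ S (ofLex x3).1 := by rw [e, hta3]; exact hanc p3.1.down
        exact Or.inl (bdroute A1 (hS𝒜 _ hA1S) hvb1 hA1S h3S)
    · have hvA1 : v ∈ (p1.1.down : Set V) := (hC p1.1.down).1 p1.2 hvC1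
      rcases hv3 with hv3 | ⟨p3, ho3, hta3, hvC3⟩
      · -- (C, U)
        obtain ⟨A3, hA3S, hvb3⟩ := hUmem.mp hv3
        have e : A3 = (p1.1.down : Set V) := huniq (hS𝒜 _ hA3S) p1.1.down.2 hvb3.1 hvA1
        rw [e] at hvb3 hA3S
        have h1S : (p1.1.down : Set V) ∈ S (ofLex x1).1 := by rw [hta1]; exact hanc p1.1.down
        exact Or.inl (bdroute p1.1.down.1 p1.1.down.2 hvb3 h1S hA3S)
      · -- (C, C)
        obtain ⟨⟨A1⟩, s1⟩ := p1
        obtain ⟨⟨A3⟩, s3⟩ := p3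
        have hvA3 : v ∈ (A3 : Set V) := (hC A3).1 s3 hvC3
        have eA : A3 = A1 := Subtype.ext (huniq A3.2 A1.2 hvA3 hvA1)
        subst eA
        have ht13 : (ofLex x1).1 = (ofLex x3).1 := by rw [hta1, hta3]
        have ht2 : (ofLex x2).1 = (ofLex x1).1 :=
          le_antisymm (ht13 ▸ ht23) ht12
        have ho12 : (ofLex x1).2 < (ofLex x2).2 := by
          rcases hlex (x:=x1) (y:=x2) (by exact h12) with h | ⟨_, h⟩
          · exact absurd ht2.symm h.ne
          · exact h
        have ho23 : (ofLex x2).2 < (ofLex x3).2 := by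
          rcases hlex (x:=x2) (y:=x3) (by exact h23) with h | ⟨_, h⟩
          · exact absurd (ht2.trans ht13) h.ne
          · exact h
        rw [ho1] at ho12
        rw [ho3] at ho23
        obtain ⟨q2, hq2, hlt2⟩ := WithBot.lt_iff_exists_coe.mp ho12
        rw [hq2] at ho23
        have hlt23 : q2 < toLex ⟨⟨A3⟩, s3⟩ := WithBot.coe_lt_coe.mp ho23
        obtain ⟨s2, rfl, hs12, hs23⟩ :=
          sigma_lex_between (WithBot.coe_lt_coe.mp hlt2) hlt23
        refine Or.inr ⟨⟨⟨A3⟩, s2⟩, hq2, ht2.trans hta1, ?_⟩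
        exact (hC A3).2.2.2.1 s1 s2 s3 hs12 hs23 ⟨hvC1, hvC3⟩
  · -- quasi-size of the bags
    intro x
    set t := (ofLex x).1 with htdef
    have hStfin : (S t).Finite := Set.finite_of_encard_le_coe (hSk t)
    set f : Set V → Set V := fun A => if hA : A ∈ 𝒜 then Yb ⟨A, hA⟩ else ∅ with hfdef
    have hY0card : (⋃ A ∈ S t, f A).encard ≤ (k : ℕ∞) * a := by
      refine le_trans (encard_biUnion_le_aux (a := a) hStfin f ?_) ?_
      · intro A hA
        simp only [hfdef, hS𝒜 t hA, dif_pos]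
        exact hYb1 ⟨A, hS𝒜 t hA⟩
      · exact mul_le_mul_left (hSk t) _
    have hY0cov : ∀ v ∈ U t, ∃ y ∈ ⋃ A ∈ S t, f A, G.edist v y ≤ b := by
      intro v hv
      obtain ⟨A, hAS, hvb⟩ := hUmem.mp hv
      obtain ⟨y, hy, hyd⟩ := hYb2 ⟨A, hS𝒜 t hAS⟩ v hvb
      refine ⟨y, ?_, hyd⟩
      refine Set.mem_biUnion hAS ?_
      simp only [hfdef, hS𝒜 t hAS, dif_pos]
      exact hy
    have hka : (k : ℕ∞) * a ≤ ((k + 1 : ℕ) * a : ℕ) := by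
      push_cast
      exact mul_le_mul_left (by simp) _
    by_cases hp : ∃ p : Σ (q : OWrap ↥𝒜), TA q.down,
        (ofLex x).2 = ((toLex p : Σₗ (q : OWrap ↥𝒜), TA q.down) : WithBot (Σₗ (q : OWrap ↥𝒜), TA q.down)) ∧
        (ofLex x).1 = anc p.1.down
    · obtain ⟨p, hop, htp⟩ := hp
      refine ⟨YC p.1.down p.2 ∪ ⋃ A ∈ S t, f A, ?_, ?_⟩
      · calc (YC p.1.down p.2 ∪ ⋃ A ∈ S t, f A).encard
            ≤ (YC p.1.down p.2).encard + (⋃ A ∈ S t, f A).encard := Set.encard_union_le _ _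
          _ ≤ (a : ℕ∞) + (k : ℕ∞) * a := add_le_add (hYC1 p.1.down p.2) hY0card
          _ ≤ ((k + 1 : ℕ) * a : ℕ) := by push_cast; ring_nf; exact le_refl _
      · intro v hv
        rw [hBagMem] at hv
        rcases hv with hv | ⟨p', hop', _, hvC⟩
        · obtain ⟨y, hy, hyd⟩ := hY0cov v hv
          exact ⟨y, Or.inr hy, hyd⟩
        · have : p' = p := by
            rw [hop] at hop'
            exact toLex_inj.mp (WithBot.coe_injective hop'.symm)
          rw [this] at hvC
          obtain ⟨y, hy, hyd⟩ := hYC2 p.1.down p.2 v hvC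
          exact ⟨y, Or.inl hy, hyd⟩
    · refine ⟨⋃ A ∈ S t, f A, le_trans hY0card hka, ?_⟩
      intro v hv
      rw [hBagMem] at hv
      rcases hv with hv | ⟨p', hop', htp', _⟩
      · exact hY0cov v hv
      · exact absurd ⟨p', hop', htp'⟩ hp
end

section
/- Fix integers c ≥ 2 and ℓ ≥ 1, d_0 = 5c·3^{2ℓ(ℓ+1)}, and a space requirement δ and budget (α,β) for century 0. In every connected graph G with a tie-breaker Λ, there is a 0th-century society in G. -/
open SimpleGraph

/-- Vertices of the tree `H ℓ`: the root `none`, and for each of three branches `i : Fin 3`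
a vertex `some (i, l)` for each binary sequence `l` of length `< ℓ`.  For `ℓ = 0` only the
root exists. -/
def HVert (ℓ : ℕ) : Type := Option (Fin 3 × {l : List (Fin 2) // l.length < ℓ})

/-- The tree `H ℓ`: every vertex has degree one or three, and every path from the root to a
leaf has length exactly `ℓ`.  (`HTree 0` is the one-vertex tree.) -/
def HTree (ℓ : ℕ) : SimpleGraph (HVert ℓ) :=
  SimpleGraph.fromRel (fun x y =>
    (∃ (i : Fin 3) (h : ([] : List (Fin 2)).length < ℓ), x = none ∧ y = some (i, ⟨[], h⟩)) ∨
    (∃ (i : Fin 3) (l : List (Fin 2)) (b : Fin 2) (h : l.length < ℓ)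
        (h' : (l ++ [b]).length < ℓ),
      x = some (i, ⟨l, h⟩) ∧ y = some (i, ⟨l ++ [b], h'⟩)))

/-- Whether an element of `U(H ℓ)` belongs to branch `i` (the component `B_i` of
`H_ℓ ∖ root`, or an edge with an endpoint there: an edge of `B_i`, or `e_i`). -/
def inBranch (ℓ : ℕ) (i : Fin 3) : (HVert ℓ ⊕ (HTree ℓ).edgeSet) → Prop
  | Sum.inl v => ∃ p, v = some (i, p)
  | Sum.inr e => ∃ v, v ∈ (e : Sym2 (HVert ℓ)) ∧ ∃ p, v = some (i, p)

/-- `V(η(B_i)) ∪ V(η(e_i))`: the union of the branch sets of branch `i`. -/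
def branchSide {V : Type} (ℓ : ℕ) (i : Fin 3)
    (η : (HVert ℓ ⊕ (HTree ℓ).edgeSet) → Set V) : Set V :=
  ⋃ x ∈ {x | inBranch ℓ i x}, η x

/-- `η` exhibits `H_ℓ` as a `c`-superfat minor of `G`. -/
def IsSuperfatMinorVia {V : Type} (G : SimpleGraph V) (ℓ c : ℕ)
    (η : (HVert ℓ ⊕ (HTree ℓ).edgeSet) → Set V) : Prop :=
  IsFatMinorVia G (HTree ℓ) c η ∧
  ∀ i j : Fin 3, i ≠ j → ∀ x ∈ branchSide ℓ i η, ∀ y ∈ branchSide ℓ j η,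
    ((3 * c : ℕ) : ℕ∞) < G.edist x y

/-- `G` contains `H_ℓ` as a `c`-superfat minor. -/
def HasSuperfatMinor {V : Type} (G : SimpleGraph V) (ℓ c : ℕ) : Prop :=
  ∃ η, IsSuperfatMinorVia G ℓ c η

/-- `X ⊆ V(G)` contains a `c`-superfat `H_ℓ`-minor of `G` (distances in `G`). -/
def SuperfatIn {V : Type} (G : SimpleGraph V) (ℓ c : ℕ) (X : Set V) : Prop :=
  ∃ η, IsSuperfatMinorVia G ℓ c η ∧ ∀ z, η z ⊆ X

/-- A building: a set of vertices inducing a connected subgraph. -/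
def IsBuilding {V : Type} (G : SimpleGraph V) (X : Set V) : Prop := (G.induce X).Connected

/-- A (finite) path of `G`, bundled with its two ends. -/
structure PathIn {V : Type} (G : SimpleGraph V) where
  a : V
  b : V
  walk : G.Walk a b
  isPath : walk.IsPath

/-- The edges of a bundled path, as a set of edges of `G`. -/
def PathIn.edgeSet {V : Type} {G : SimpleGraph V} (P : PathIn G) : Set G.edgeSet :=
  {e | (e : Sym2 V) ∈ P.walk.edges}

/-- The reverse of a bundled path. -/
def PathIn.rev {V : Type} {G : SimpleGraph V} (P : PathIn G) : PathIn G :=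
  ⟨P.b, P.a, P.walk.reverse, P.isPath.reverse⟩

/-- `P` is `Λ`-shorter than `Q`: `P` has fewer edges, or they have equally many edges and
the `Λ`-first edge of the symmetric difference of their edge sets belongs to `P`. -/
def LShorter {V : Type} {G : SimpleGraph V} (Λ : G.edgeSet → G.edgeSet → Prop)
    (P Q : PathIn G) : Prop :=
  P.walk.length < Q.walk.length ∨
  (P.walk.length = Q.walk.length ∧
    ∃ e ∈ P.edgeSet \ Q.edgeSet,
      ∀ f ∈ (P.edgeSet \ Q.edgeSet) ∪ (Q.edgeSet \ P.edgeSet), f ≠ e → Λ e f)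

/-- The Voronoi cell of `X` with respect to the family `S` (under the tie-breaker `Λ`):
all vertices `v` such that some path between `v` and `X` is `Λ`-shorter than every other
path between `v` and any member of `S`. -/
def VCell {V : Type} (G : SimpleGraph V) (Λ : G.edgeSet → G.edgeSet → Prop)
    (S : Set (Set V)) (X : Set V) : Set V :=
  {v | ∃ P : PathIn G, P.a = v ∧ P.b ∈ X ∧
    ∀ Y ∈ S, ∀ Q : PathIn G, Q.a = v → Q.b ∈ Y → Q ≠ P → LShorter Λ P Q}

/-- Two sets of vertices touch: they intersect or are joined by an edge. -/
def Touch {V : Type} (G : SimpleGraph V) (X Y : Set V) : Prop :=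
  (X ∩ Y).Nonempty ∨ ∃ x ∈ X, ∃ y ∈ Y, G.Adj x y

/-- `X` adjoins `Y` (both in `𝒯`): their Voronoi cells touch. -/
def Adjoins {V : Type} (G : SimpleGraph V) (Λ : G.edgeSet → G.edgeSet → Prop)
    (𝒯 : Set (Set V)) (X Y : Set V) : Prop :=
  X ≠ Y ∧ Touch G (VCell G Λ 𝒯 X) (VCell G Λ 𝒯 Y)

/-- `C ⊆ 𝒯` is adjoin-connected. -/
def AdjoinConnected {V : Type} (G : SimpleGraph V) (Λ : G.edgeSet → G.edgeSet → Prop)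
    (𝒯 : Set (Set V)) (C : Set (Set V)) : Prop :=
  ∀ A B : Set (Set V), A ∪ B = C → Disjoint A B → A.Nonempty → B.Nonempty →
    ∃ X ∈ A, ∃ Y ∈ B, Adjoins G Λ 𝒯 X Y

/-- A space requirement for century `k`. -/
def IsSpaceReq (c ℓ d₀ k : ℕ) (δ : ℤ → ℕ) : Prop :=
  (∀ i : ℤ, 2 * (k : ℤ) - 2 ≤ i → i < 2 * (ℓ : ℤ) → 2 * δ (i + 1) + 2 ≤ δ i) ∧
  (∀ i : ℤ, 0 ≤ i → i ≤ 2 * (ℓ : ℤ) → δ i ≤ d₀) ∧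
  5 * c ≤ δ (2 * (ℓ : ℤ))

-- The rank of a member of a society: `k` for forts, `k - 1` for houses.
open Classical in
noncomputable def rkSoc {V : Type} (k : ℕ) (forts : Set (Set V)) (X : Set V) : ℤ :=
  if X ∈ forts then (k : ℤ) else (k : ℤ) - 1

/-- A `k`th-century society in `G` (with tie-breaker `Λ`, space requirement `δ` and
budget `(α, β)`): the members of `𝒯` are pairwise disjoint buildings, `forts ⊆ 𝒯` are
its forts and `𝒯 \ forts` its houses. -/
def IsSociety {V : Type} (G : SimpleGraph V) (Λ : G.edgeSet → G.edgeSet → Prop)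
    (c d₀ k : ℕ) (δ : ℤ → ℕ) (α β : ℕ) (𝒯 forts : Set (Set V)) : Prop :=
  forts ⊆ 𝒯 ∧
  (∀ X ∈ 𝒯, IsBuilding G X) ∧
  (𝒯.Pairwise fun X Y => Disjoint X Y) ∧
  (∀ v : V, ∃ X ∈ 𝒯, setDist G {v} X ≤ (d₀ : ℕ∞)) ∧
  (∀ X ∈ 𝒯, ∀ Y ∈ 𝒯, X ≠ Y →
    ((δ (rkSoc k forts X + rkSoc k forts Y) : ℕ) : ℕ∞) < setDist G X Y) ∧
  (∀ X ∈ forts, SuperfatIn G k c X) ∧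
  (∀ X ∈ forts, QuasiBound G X α β) ∧
  (∀ C : Set (Set V), C ⊆ 𝒯 \ forts → AdjoinConnected G Λ 𝒯 C →
    (∀ C', C ⊆ C' → C' ⊆ 𝒯 \ forts → AdjoinConnected G Λ 𝒯 C' → C' = C) →
    QuasiBound G (⋃ X ∈ C, VCell G Λ 𝒯 X) α (β - d₀))

-- The rank of a member of a realm: `k+1` for castles, `k` for forts, `k-1` for houses.
open Classical in
noncomputable def rkRealm {V : Type} (k : ℕ) (forts castles : Set (Set V)) (X : Set V) : ℤ :=
  if X ∈ castles then (k : ℤ) + 1 else if X ∈ forts then (k : ℤ) else (k : ℤ) - 1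

-- The class of a member of a realm: `2` for castles, `1` for forts, `0` for houses.
open Classical in
noncomputable def classRealm {V : Type} (forts castles : Set (Set V)) (X : Set V) : ℕ :=
  if X ∈ castles then 2 else if X ∈ forts then 1 else 0

/-- A community of a realm: an adjoin-connected set of houses (not necessarily maximal). -/
def IsCommunity {V : Type} (G : SimpleGraph V) (Λ : G.edgeSet → G.edgeSet → Prop)
    (𝒯 forts castles C : Set (Set V)) : Prop :=
  C ⊆ 𝒯 ∧ (∀ X ∈ C, X ∉ forts ∧ X ∉ castles) ∧ AdjoinConnected G Λ 𝒯 C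

/-- A `k`th-century realm in `G`: buildings partitioned into houses, forts (`forts`)
and castles (`castles`), satisfying the axioms of a realm. -/
def IsRealm {V : Type} (G : SimpleGraph V) (Λ : G.edgeSet → G.edgeSet → Prop)
    (c ℓ d₀ k : ℕ) (δ : ℤ → ℕ) (α β : ℕ) (𝒯 forts castles : Set (Set V)) : Prop :=
  forts ⊆ 𝒯 ∧ castles ⊆ 𝒯 ∧ Disjoint forts castles ∧
  (∀ X ∈ 𝒯, IsBuilding G X) ∧
  (𝒯.Pairwise fun X Y => Disjoint X Y) ∧
  (∀ v : V, ∃ X ∈ 𝒯, setDist G {v} X ≤ (d₀ : ℕ∞)) ∧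
  (∀ X ∈ 𝒯, ∀ Y ∈ 𝒯, X ≠ Y →
    ((δ (rkRealm k forts castles X + rkRealm k forts castles Y) : ℕ) : ℕ∞) < setDist G X Y) ∧
  (∀ X ∈ forts, SuperfatIn G k c X) ∧
  (∀ X ∈ castles, SuperfatIn G (k + 1) c X) ∧
  (∀ X ∈ forts, QuasiBound G X α β) ∧
  (∀ X ∈ castles, QuasiBound G X (8 * α) (β + (ℓ - k) * d₀)) ∧
  (∀ C, IsCommunity G Λ 𝒯 forts castles C → QuasiBound G (⋃₀ C) α β)

/-- The realm `(𝒯₂, forts₂, castles₂)` is an extension of `(𝒯₁, forts₁, castles₁)`. -/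
def RealmExtends {V : Type} (𝒯₁ forts₁ castles₁ 𝒯₂ forts₂ castles₂ : Set (Set V)) : Prop :=
  ∀ X₁ ∈ 𝒯₁, ∃ X₂ ∈ 𝒯₂, X₁ ⊆ X₂ ∧
    (classRealm forts₁ castles₁ X₁ < classRealm forts₂ castles₂ X₂ ∨
      (X₁ = X₂ ∧ classRealm forts₁ castles₁ X₁ = classRealm forts₂ castles₂ X₂))

/-- An optimal `k`th-century realm: no other realm is an extension of it. -/
def IsOptimalRealm {V : Type} (G : SimpleGraph V) (Λ : G.edgeSet → G.edgeSet → Prop)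
    (c ℓ d₀ k : ℕ) (δ : ℤ → ℕ) (α β : ℕ) (𝒯 forts castles : Set (Set V)) : Prop :=
  IsRealm G Λ c ℓ d₀ k δ α β 𝒯 forts castles ∧
  ∀ 𝒯' forts' castles', IsRealm G Λ c ℓ d₀ k δ α β 𝒯' forts' castles' →
    RealmExtends 𝒯 forts castles 𝒯' forts' castles' →
    𝒯' = 𝒯 ∧ forts' = forts ∧ castles' = castles

/-- A `c`-leg on `X` in `W`: a geodesic `P` of length exactly `c` with one end in `X`,
all other vertices in `W`, such that every vertex of `W` not on `P` has distance more
than `c` from `X`. -/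
def IsCLeg {V : Type} (G : SimpleGraph V) (c : ℕ) (X W : Set V) (P : PathIn G) : Prop :=
  P.a ∈ X ∧
  (∀ v ∈ P.walk.support, v = P.a ∨ v ∈ W) ∧
  P.walk.length = c ∧
  G.edist P.a P.b = (c : ℕ∞) ∧
  (∀ v ∈ W, v ∉ P.walk.support → (c : ℕ∞) < setDist G {v} X)

/-- `P` is an induced path of `G`. -/
def IsInducedPath {V : Type} (G : SimpleGraph V) (P : PathIn G) : Prop :=
  ∀ u ∈ P.walk.support, ∀ v ∈ P.walk.support, G.Adj u v → s(u, v) ∈ P.walk.edges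

/-- The subpath of `P` of length `c` starting at its end `P.a` is a geodesic, and the
vertices of `P` at distance at most `c` from `X` are exactly those of this subpath. -/
def GeoPrefix {V : Type} (G : SimpleGraph V) (c : ℕ) (X : Set V) (P : PathIn G) : Prop :=
  (∀ w, P.walk.support[c]? = some w → G.edist P.a w = (c : ℕ∞)) ∧
  (∀ v ∈ P.walk.support, (setDist G {v} X ≤ (c : ℕ∞) ↔ v ∈ P.walk.support.take (c + 1)))

/-- `P` is a passage of the realm `(𝒯, forts, castles)` joining `X₁` and `X₂`. -/
def IsPassage {V : Type} (G : SimpleGraph V) (Λ : G.edgeSet → G.edgeSet → Prop)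
    (c ℓ d₀ k : ℕ) (δ : ℤ → ℕ) (𝒯 forts castles : Set (Set V))
    (X₁ X₂ : Set V) (P : PathIn G) : Prop :=
  X₁ ∈ 𝒯 ∧ X₂ ∈ 𝒯 ∧ X₁ ∉ castles ∧ X₂ ∉ castles ∧ X₁ ≠ X₂ ∧
  IsInducedPath G P ∧
  P.a ∈ X₁ ∧ P.b ∈ X₂ ∧
  (∀ v ∈ P.walk.support, v ≠ P.a → v ≠ P.b → v ∉ X₁ ∪ X₂) ∧
  (∀ Y ∈ 𝒯, Y ≠ X₁ → Y ≠ X₂ →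
    ((δ ((k : ℤ) + 1 + rkRealm k forts castles Y) : ℕ) : ℕ∞) <
      setDist G {v | v ∈ P.walk.support} Y) ∧
  GeoPrefix G c X₁ P ∧ GeoPrefix G c X₂ P.rev

/-- `P` is a passage incident with `X`. -/
def PassageIncident {V : Type} (G : SimpleGraph V) (Λ : G.edgeSet → G.edgeSet → Prop)
    (c ℓ d₀ k : ℕ) (δ : ℤ → ℕ) (𝒯 forts castles : Set (Set V))
    (X : Set V) (P : PathIn G) : Prop :=
  ∃ Y, IsPassage G Λ c ℓ d₀ k δ 𝒯 forts castles X Y P ∨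
    IsPassage G Λ c ℓ d₀ k δ 𝒯 forts castles Y X P

/-- The houses and forts of a subset `A` of a realm: `A⁰ = A ∖ castles`. -/
def nonCastles {V : Type} (castles A : Set (Set V)) : Set (Set V) := A \ castles

/-- A community (or indeed any set of buildings) `D` adjoins a fort `X` if some member of
`D` adjoins `X`. -/
def CommAdjoins {V : Type} (G : SimpleGraph V) (Λ : G.edgeSet → G.edgeSet → Prop)
    (𝒯 : Set (Set V)) (D : Set (Set V)) (X : Set V) : Prop :=
  ∃ Y ∈ D, Adjoins G Λ 𝒯 Y X

/-- Two forts `X₁, X₂ ∈ C` semiadjoin in `C`: they adjoin, or some community included in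
`C` adjoins both. -/
def Semiadjoin {V : Type} (G : SimpleGraph V) (Λ : G.edgeSet → G.edgeSet → Prop)
    (𝒯 forts castles : Set (Set V)) (C : Set (Set V)) (X₁ X₂ : Set V) : Prop :=
  Adjoins G Λ 𝒯 X₁ X₂ ∨
    ∃ D ⊆ C, IsCommunity G Λ 𝒯 forts castles D ∧
      CommAdjoins G Λ 𝒯 D X₁ ∧ CommAdjoins G Λ 𝒯 D X₂

/-- A fort `X ∈ C` that semiadjoins (in `C`) at most one other fort of `C`. -/
def FortPeripheral {V : Type} (G : SimpleGraph V) (Λ : G.edgeSet → G.edgeSet → Prop)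
    (𝒯 forts castles : Set (Set V)) (C : Set (Set V)) (X : Set V) : Prop :=
  X ∈ C ∧ X ∈ forts ∧
  {Y | Y ∈ C ∧ Y ∈ forts ∧ Y ≠ X ∧
    Semiadjoin G Λ 𝒯 forts castles C X Y}.Subsingleton

/-- `X ∈ C` is `C`-peripheral. -/
def Peripheral {V : Type} (G : SimpleGraph V) (Λ : G.edgeSet → G.edgeSet → Prop)
    (𝒯 forts castles : Set (Set V)) (C : Set (Set V)) (X : Set V) : Prop :=
  FortPeripheral G Λ 𝒯 forts castles C X ∨
  (X ∈ C ∧ X ∉ forts ∧ X ∉ castles ∧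
    ∀ D ⊆ C, IsCommunity G Λ 𝒯 forts castles D → X ∈ D →
      {Y | Y ∈ C ∧ Y ∈ forts ∧ CommAdjoins G Λ 𝒯 D Y}.Subsingleton ∧
      ∀ Y ∈ C, Y ∈ forts → CommAdjoins G Λ 𝒯 D Y →
        FortPeripheral G Λ 𝒯 forts castles C Y)

/-- An integer interval. -/
def IsIntInterval (I : Set ℤ) : Prop :=
  ∀ a ∈ I, ∀ b ∈ I, ∀ x : ℤ, a ≤ x → x ≤ b → x ∈ I

/-- `(a,b)` is an end-set of the integer interval `I`. -/
def IsEndSet (I : Set ℤ) (a b : ℤ) : Prop :=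
  a ∈ I ∧ b ∈ I ∧ a - 1 ∉ I ∧ b + 1 ∉ I

/-- A province of type `t` of the realm `(𝒯, forts, castles)`. -/
def IsProvince {V : Type} (G : SimpleGraph V) (Λ : G.edgeSet → G.edgeSet → Prop)
    (ℓ k : ℕ) (𝒯 forts castles : Set (Set V)) (t : ℕ) (A : Set (Set V)) : Prop :=
  A ⊆ 𝒯 ∧ k + 1 ≤ t ∧ t ≤ ℓ - 1 ∧
  {X | X ∈ A ∧ X ∈ forts ∧
    Peripheral G Λ 𝒯 forts castles (nonCastles castles A) X}.encard ≤ 3 ^ (t - k) - 1 ∧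
  (∃ 𝒟 : Set (Set (Set V)), 𝒟.encard ≤ 3 ^ (t - k) - 2 ∧
    (∀ D ∈ 𝒟, IsCommunity G Λ 𝒯 forts castles D) ∧
    ⋃₀ 𝒟 = {X | X ∈ A ∧ X ∉ forts ∧ X ∉ castles ∧
      Peripheral G Λ 𝒯 forts castles (nonCastles castles A) X}) ∧
  {X | X ∈ A ∧ X ∈ castles}.encard = 3 ^ (t - k - 1)

/-- `X ∈ 𝒯` is a rebel: it is included in no province of the government. -/
def Rebel {V : Type} (𝒯 : Set (Set V)) (provs : Set (Set (Set V))) (X : Set V) : Prop :=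
  X ∈ 𝒯 ∧ ∀ A ∈ provs, X ∉ A

/-- A government for the realm `(𝒯, forts, castles)`: a set `provs` of pairwise
vertex-disjoint provinces, with framework `F A` and type `ty A` for each `A ∈ provs`. -/
def IsGovernment {V : Type} (G : SimpleGraph V) (Λ : G.edgeSet → G.edgeSet → Prop)
    (c ℓ d₀ k : ℕ) (δ : ℤ → ℕ) (𝒯 forts castles : Set (Set V))
    (provs : Set (Set (Set V))) (F : Set (Set V) → Set V) (ty : Set (Set V) → ℕ) : Prop :=
  (∀ A ∈ provs, IsProvince G Λ ℓ k 𝒯 forts castles (ty A) A) ∧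
  (provs.Pairwise fun A A' => Disjoint (⋃₀ A) (⋃₀ A')) ∧
  (∀ A ∈ provs, IsBuilding G (F A) ∧ ⋃₀ A ⊆ F A) ∧
  (∀ A ∈ provs, ∀ v ∈ F A, ∃ x, (∃ X ∈ A, x ∈ X) ∧
    ∃ p : G.Walk v x, (∀ u ∈ p.support, u ∈ F A) ∧ p.length ≤ d₀ * (ty A - k - 1)) ∧
  (∀ A ∈ provs, ∀ A' ∈ provs, A ≠ A' →
    ((δ ((ty A : ℤ) + (ty A' : ℤ)) : ℕ) : ℕ∞) < setDist G (F A) (F A')) ∧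
  (∀ X ∈ castles, ∃ A ∈ provs, X ∈ A) ∧
  (∀ A ∈ provs, ∀ X, Rebel 𝒯 provs X →
    ((δ ((ty A : ℤ) + rkRealm k forts castles X) : ℕ) : ℕ∞) < setDist G (F A) X) ∧
  (∀ A ∈ provs, SuperfatIn G (ty A) c (F A))

/-- The strongholds of a government: the frameworks of its provinces and its rebels. -/
def Strongholds {V : Type} (𝒯 : Set (Set V)) (provs : Set (Set (Set V)))
    (F : Set (Set V) → Set V) : Set (Set V) :=
  (F '' provs) ∪ {X | Rebel 𝒯 provs X}

/-- `L_𝒢(X)`: the set of `X`-local vertices (for a stronghold `X`). -/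
def LocalSet {V : Type} (G : SimpleGraph V) (Λ : G.edgeSet → G.edgeSet → Prop)
    (𝒯 : Set (Set V)) (provs : Set (Set (Set V))) (F : Set (Set V) → Set V)
    (X : Set V) : Set V :=
  VCell G Λ (Strongholds 𝒯 provs F) X

/-- The stronghold `X` talks to the stronghold `Y`: there is a channel between them,
i.e. a path `R` with an edge `uv` such that the two components of `R ∖ {uv}` are
respectively `X`-local and `Y`-local. -/
def TalksTo {V : Type} (G : SimpleGraph V) (Λ : G.edgeSet → G.edgeSet → Prop)
    (𝒯 : Set (Set V)) (provs : Set (Set (Set V))) (F : Set (Set V) → Set V)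
    (X Y : Set V) : Prop :=
  ∃ (a u v b : V) (p : G.Walk a u) (q : G.Walk v b),
    p.IsPath ∧ q.IsPath ∧ G.Adj u v ∧
    (∀ w ∈ p.support, w ∈ LocalSet G Λ 𝒯 provs F X) ∧
    (∀ w ∈ q.support, w ∈ LocalSet G Λ 𝒯 provs F Y) ∧
    (∀ w ∈ p.support, w ∉ q.support)

/-- A set `C` of rebels is in communication. -/
def InCommunication {V : Type} (G : SimpleGraph V) (Λ : G.edgeSet → G.edgeSet → Prop)
    (𝒯 : Set (Set V)) (provs : Set (Set (Set V))) (F : Set (Set V) → Set V)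
    (C : Set (Set V)) : Prop :=
  ∀ D E : Set (Set V), D ∪ E = C → Disjoint D E → D.Nonempty → E.Nonempty →
    ∃ X ∈ D, ∃ Y ∈ E, TalksTo G Λ 𝒯 provs F X Y

/-- A network: a maximal set of rebel houses that is in communication. -/
def IsNetwork {V : Type} (G : SimpleGraph V) (Λ : G.edgeSet → G.edgeSet → Prop)
    (𝒯 forts castles : Set (Set V)) (provs : Set (Set (Set V))) (F : Set (Set V) → Set V)
    (N : Set (Set V)) : Prop :=
  (∀ X ∈ N, Rebel 𝒯 provs X ∧ X ∉ forts ∧ X ∉ castles) ∧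
  InCommunication G Λ 𝒯 provs F N ∧
  (∀ N', N ⊆ N' → (∀ X ∈ N', Rebel 𝒯 provs X ∧ X ∉ forts ∧ X ∉ castles) →
    InCommunication G Λ 𝒯 provs F N' → N' = N)

/-- A set `C` of rebels is organized: its houses form a union of networks. -/
def Organized {V : Type} (G : SimpleGraph V) (Λ : G.edgeSet → G.edgeSet → Prop)
    (𝒯 forts castles : Set (Set V)) (provs : Set (Set (Set V))) (F : Set (Set V) → Set V)
    (C : Set (Set V)) : Prop :=
  ∃ 𝒩 : Set (Set (Set V)), (∀ N ∈ 𝒩, IsNetwork G Λ 𝒯 forts castles provs F N) ∧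
    ⋃₀ 𝒩 = {X | X ∈ C ∧ X ∉ forts ∧ X ∉ castles}

/-- A cabal. -/
def IsCabal {V : Type} (G : SimpleGraph V) (Λ : G.edgeSet → G.edgeSet → Prop)
    (ℓ k : ℕ) (𝒯 forts castles : Set (Set V)) (provs : Set (Set (Set V)))
    (F : Set (Set V) → Set V) (ty : Set (Set V) → ℕ) (C : Set (Set V)) : Prop :=
  (∀ X ∈ C, Rebel 𝒯 provs X) ∧
  InCommunication G Λ 𝒯 provs F C ∧
  Organized G Λ 𝒯 forts castles provs F C ∧
  ∃ (Ldr : Set (Set V)) (LN : Set (Set (Set V))),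
    Ldr ⊆ {X | X ∈ C ∧ X ∈ forts} ∧ Ldr.encard ≤ 2 ∧
    (∀ N ∈ LN, IsNetwork G Λ 𝒯 forts castles provs F N ∧ N ⊆ C) ∧ LN.encard ≤ 3 ∧
    (∀ X ∈ C, Peripheral G Λ 𝒯 forts castles C X →
      X ∈ Ldr ∨ ∃ N ∈ LN, X ∈ N) ∧
    (∀ X ∈ C, (∃ Y, Rebel 𝒯 provs Y ∧ Y ∉ C ∧ TalksTo G Λ 𝒯 provs F X Y) →
      X ∈ Ldr ∨ ∃ N ∈ LN, X ∈ N) ∧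
    (∃ j : ℕ, k + 1 ≤ j ∧ j ≤ ℓ - 1 ∧
      ∃ A₁ A₂ A₃, A₁ ∈ provs ∧ A₂ ∈ provs ∧ A₃ ∈ provs ∧
        A₁ ≠ A₂ ∧ A₁ ≠ A₃ ∧ A₂ ≠ A₃ ∧ ty A₁ = j ∧ ty A₂ = j ∧ ty A₃ = j ∧
        (∃ X ∈ C, TalksTo G Λ 𝒯 provs F X (F A₁)) ∧
        (∃ X ∈ C, TalksTo G Λ 𝒯 provs F X (F A₂)) ∧
        (∃ X ∈ C, TalksTo G Λ 𝒯 provs F X (F A₃))) ∧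
    (C.encard = 1 ∨ IsNetwork G Λ 𝒯 forts castles provs F C ∨
      ∀ j : ℕ, k + 1 ≤ j → j ≤ ℓ - 1 →
        {A | A ∈ provs ∧ ty A = j ∧ ∃ X ∈ C, TalksTo G Λ 𝒯 provs F X (F A)}.encard ≤ 4)

/-- A small government: each framework has quasi-bound at most
`(7(ℓ−k)3^{ℓ−k}α, β + 2(ℓ−k−1)d₀)`. -/
def SmallGov {V : Type} (G : SimpleGraph V) (ℓ d₀ k α β : ℕ)
    (provs : Set (Set (Set V))) (F : Set (Set V) → Set V) : Prop :=
  ∀ A ∈ provs, QuasiBound G (F A) (7 * (ℓ - k) * 3 ^ (ℓ - k) * α)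
    (β + 2 * (ℓ - k - 1) * d₀)

/-- The government `(provs₂, F₂, ty₂)` extends the government `(provs₁, F₁, ty₁)`. -/
def GovExtends {V : Type} (𝒯 : Set (Set V))
    (provs₁ : Set (Set (Set V))) (F₁ : Set (Set V) → Set V) (ty₁ : Set (Set V) → ℕ)
    (provs₂ : Set (Set (Set V))) (F₂ : Set (Set V) → Set V) (ty₂ : Set (Set V) → ℕ) : Prop :=
  (∀ X, Rebel 𝒯 provs₁ X → Rebel 𝒯 provs₂ X ∨ ∃ A ∈ provs₂, X ∈ A) ∧
  (∀ A₁ ∈ provs₁, ∃ A₂ ∈ provs₂, A₁ ⊆ A₂ ∧ F₁ A₁ ⊆ F₂ A₂ ∧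
    ((A₁ = A₂ ∧ F₁ A₁ = F₂ A₂ ∧ ty₂ A₂ = ty₁ A₁) ∨ ty₁ A₁ < ty₂ A₂))

/-- Two governments are the same (agree on provinces and, there, on frameworks and types). -/
def GovEquiv {V : Type}
    (provs₁ : Set (Set (Set V))) (F₁ : Set (Set V) → Set V) (ty₁ : Set (Set V) → ℕ)
    (provs₂ : Set (Set (Set V))) (F₂ : Set (Set V) → Set V) (ty₂ : Set (Set V) → ℕ) : Prop :=
  provs₁ = provs₂ ∧ ∀ A ∈ provs₁, F₁ A = F₂ A ∧ ty₁ A = ty₂ A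

/-- A stable small government: a small government such that no other small government
extends it. -/
def StableSmallGov {V : Type} (G : SimpleGraph V) (Λ : G.edgeSet → G.edgeSet → Prop)
    (c ℓ d₀ k : ℕ) (δ : ℤ → ℕ) (α β : ℕ) (𝒯 forts castles : Set (Set V))
    (provs : Set (Set (Set V))) (F : Set (Set V) → Set V) (ty : Set (Set V) → ℕ) : Prop :=
  IsGovernment G Λ c ℓ d₀ k δ 𝒯 forts castles provs F ty ∧
  SmallGov G ℓ d₀ k α β provs F ∧
  ∀ provs' F' ty', IsGovernment G Λ c ℓ d₀ k δ 𝒯 forts castles provs' F' ty' →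
    SmallGov G ℓ d₀ k α β provs' F' →
    GovExtends 𝒯 provs F ty provs' F' ty' →
    GovEquiv provs F ty provs' F' ty'

/-! ### Auxiliary lemmas -/

lemma setDist_singleton' {V : Type} (G : SimpleGraph V) (u w : V) :
    setDist G {u} {w} = G.edist u w := by
  apply le_antisymm
  · exact iInf_le_of_le ⟨u, rfl⟩ (iInf_le_of_le ⟨w, rfl⟩ le_rfl)
  · refine le_iInf fun x => le_iInf fun y => ?_
    obtain ⟨x, hx⟩ := x; obtain ⟨y, hy⟩ := y
    simp only [Set.mem_singleton_iff] at hx hy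
    subst hx; subst hy; exact le_rfl

lemma induce_singleton_connected {V : Type} (G : SimpleGraph V) (v : V) :
    (G.induce ({v} : Set V)).Connected := by
  rw [SimpleGraph.connected_iff]
  refine ⟨fun a b => ?_, ⟨⟨v, rfl⟩⟩⟩
  have : a = b := by
    obtain ⟨a, ha⟩ := a; obtain ⟨b, hb⟩ := b
    simp only [Set.mem_singleton_iff] at ha hb
    subst ha; subst hb; rfl
  subst this; exact SimpleGraph.Reachable.refl _

lemma hvert0_eq_none (x : HVert 0) : x = none := by
  match x with
  | none => rfl
  | some ⟨i, l, hl⟩ => exact absurd hl (Nat.not_lt_zero _)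

lemma htree0_edgeSet_isEmpty : IsEmpty (HTree 0).edgeSet := by
  constructor
  rintro ⟨s, hs⟩
  induction s using Sym2.ind with
  | _ a b =>
    rw [SimpleGraph.mem_edgeSet] at hs
    simp only [HTree, SimpleGraph.fromRel_adj] at hs
    rcases hs with ⟨-, h | h⟩ <;>
      rcases h with ⟨i, h, -⟩ | ⟨i, l, b', h, -⟩ <;>
      exact absurd h (Nat.not_lt_zero _)

lemma u0_subsingleton (x y : HVert 0 ⊕ (HTree 0).edgeSet) : x = y := by
  cases x with
  | inr e => exact (htree0_edgeSet_isEmpty.false e).elim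
  | inl v =>
    cases y with
    | inr e => exact (htree0_edgeSet_isEmpty.false e).elim
    | inl w => rw [hvert0_eq_none v, hvert0_eq_none w]

lemma quasiSize_subset_singleton {V : Type} (G : SimpleGraph V) {X : Set V} {v : V}
    (hX : X ⊆ {v}) {k r : ℕ} (hk : 0 < k) : QuasiSize G X k r := by
  refine ⟨{v}, ?_, fun x hx => ⟨v, rfl, ?_⟩⟩
  · rw [Set.encard_singleton]; exact_mod_cast hk
  · have : x = v := hX hx
    subst this; simp [SimpleGraph.edist_self]

lemma quasiSize_empty {V : Type} (G : SimpleGraph V) (k r : ℕ) :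
    QuasiSize G (∅ : Set V) k r :=
  ⟨∅, by simp, fun x hx => absurd hx (Set.notMem_empty x)⟩

lemma quasiBound_singleton {V : Type} (G : SimpleGraph V) (v : V) {a b : ℕ} (ha : 0 < a) :
    QuasiBound G ({v} : Set V) a b := by
  constructor
  · refine ⟨Unit, inferInstance, fun _ => {v}, fun _ => le_rfl, fun w hw => ⟨(), hw⟩,
      fun u w hu hw _ => ⟨(), hu, hw⟩, fun t₁ t₂ t₃ _ _ => by intro x hx; exact hx.1,
      fun _ => quasiSize_subset_singleton G le_rfl ha⟩
  · exact quasiSize_subset_singleton G (fun x hx => hx.1) ha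

lemma quasiBound_empty {V : Type} (G : SimpleGraph V) (a b : ℕ) :
    QuasiBound G (∅ : Set V) a b := by
  constructor
  · refine ⟨Unit, inferInstance, fun _ => ∅, fun _ => le_rfl,
      fun w hw => absurd hw (Set.notMem_empty w),
      fun u w hu _ _ => absurd hu (Set.notMem_empty u),
      fun t₁ t₂ t₃ _ _ => by intro x hx; exact hx.1,
      fun _ => quasiSize_empty G a b⟩
  · have : bd G (∅ : Set V) = ∅ := by
      ext x; simp [bd]
    rw [this]; exact quasiSize_empty G a b

lemma superfatIn_singleton {V : Type} (G : SimpleGraph V) (c : ℕ) (v : V) :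
    SuperfatIn G 0 c ({v} : Set V) := by
  refine ⟨fun _ => {v}, ⟨⟨fun _ => ⟨v, rfl⟩, fun _ => induce_singleton_connected G v,
    fun x y hxy => absurd (u0_subsingleton x y) hxy,
    fun e => (htree0_edgeSet_isEmpty.false e).elim,
    fun x y hxy _ => absurd (u0_subsingleton x y) hxy⟩, ?_⟩, fun _ => le_rfl⟩
  intro i j hij x hx
  simp only [branchSide, Set.mem_iUnion] at hx
  obtain ⟨z, hz, -⟩ := hx
  cases z with
  | inr e => exact (htree0_edgeSet_isEmpty.false e).elim
  | inl w =>
    obtain ⟨p, -⟩ := hz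
    exact absurd p.2 (Nat.not_lt_zero _)

/-- in every connected graph with a tie-breaker there is a 0th-century
society. -/
theorem exists_zeroth_century_society {V : Type} (c ℓ : ℕ) (hc : 2 ≤ c) (hℓ : 1 ≤ ℓ)
    (d₀ : ℕ) (hd₀ : d₀ = 5 * c * 3 ^ (2 * ℓ * (ℓ + 1)))
    (δ : ℤ → ℕ) (hδ : IsSpaceReq c ℓ d₀ 0 δ)
    (α β : ℕ) (hα : 0 < α) (hβ : 0 < β)
    (G : SimpleGraph V) (hG : G.Connected)
    (Λ : G.edgeSet → G.edgeSet → Prop) (hΛ : IsWellOrder G.edgeSet Λ) :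
    ∃ 𝒯 forts : Set (Set V), IsSociety G Λ c d₀ 0 δ α β 𝒯 forts := by
  
  -- Take a maximal δ0-separated set S; the society consists of its singletons, all forts.
  classical
  have hne : Nonempty V := hG.nonempty
  set P : Set (Set V) := {S | S.Pairwise fun u w => ((δ 0 : ℕ) : ℕ∞) < G.edist u w} with hP
  have key : ∀ c ⊆ P, IsChain (· ⊆ ·) c → ∃ ub ∈ P, ∀ s ∈ c, s ⊆ ub := by
    intro c hcP hc
    refine ⟨⋃₀ c, ?_, fun s hs => Set.subset_sUnion_of_mem hs⟩
    rw [hP, Set.mem_setOf_eq, Set.pairwise_sUnion hc.directedOn]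
    exact fun s hs => hcP hs
  obtain ⟨S, hSmax⟩ := zorn_subset P key
  have hSsep : S.Pairwise fun u w => ((δ 0 : ℕ) : ℕ∞) < G.edist u w := hSmax.1
  have hδ0d : δ 0 ≤ d₀ := hδ.2.1 0 le_rfl (by positivity)
  refine ⟨(fun v => ({v} : Set V)) '' S, (fun v => ({v} : Set V)) '' S, ?_, ?_, ?_, ?_, ?_, ?_, ?_, ?_⟩
  · exact le_rfl
  · rintro X ⟨u, -, rfl⟩
    exact induce_singleton_connected G u
  · rintro X ⟨u, hu, rfl⟩ Y ⟨w, hw, rfl⟩ hXY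
    have huw : u ≠ w := fun h => hXY (by rw [h])
    exact Set.disjoint_singleton_left.mpr huw
  · intro v
    by_cases hv : v ∈ S
    · exact ⟨{v}, ⟨v, hv, rfl⟩, by rw [setDist_singleton']; simp [SimpleGraph.edist_self]⟩
    · have hins : insert v S ∉ P := by
        intro h
        exact hv (hSmax.2 h (Set.subset_insert v S) (Set.mem_insert v S))
      rw [hP, Set.mem_setOf_eq, Set.Pairwise] at hins
      push_neg at hins
      obtain ⟨a, ha, b, hb, hab, hle⟩ := hins
      rcases Set.mem_insert_iff.mp ha with rfl | haS
      · rcases Set.mem_insert_iff.mp hb with rfl | hbS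
        · exact absurd rfl hab
        · refine ⟨{b}, ⟨b, hbS, rfl⟩, ?_⟩
          rw [setDist_singleton']
          exact hle.trans (by exact_mod_cast hδ0d)
      · rcases Set.mem_insert_iff.mp hb with rfl | hbS
        · refine ⟨{a}, ⟨a, haS, rfl⟩, ?_⟩
          rw [setDist_singleton', SimpleGraph.edist_comm]
          exact hle.trans (by exact_mod_cast hδ0d)
        · exact absurd hle (not_le.mpr (hSsep haS hbS hab))
  · rintro X ⟨u, hu, rfl⟩ Y ⟨w, hw, rfl⟩ hXY
    have huw : u ≠ w := fun h => hXY (by rw [h])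
    rw [setDist_singleton']
    have h1 : rkSoc 0 ((fun v => ({v} : Set V)) '' S) ({u} : Set V) = 0 := by
      rw [rkSoc, if_pos ⟨u, hu, rfl⟩]; simp
    have h2 : rkSoc 0 ((fun v => ({v} : Set V)) '' S) ({w} : Set V) = 0 := by
      rw [rkSoc, if_pos ⟨w, hw, rfl⟩]; simp
    rw [h1, h2]
    exact hSsep hu hw huw
  · rintro X ⟨u, -, rfl⟩
    exact superfatIn_singleton G c u
  · rintro X ⟨u, -, rfl⟩
    exact quasiBound_singleton G u hα
  · intro C hC _ _
    have hC0 : C = ∅ := by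
      rw [Set.diff_self] at hC
      exact Set.subset_empty_iff.mp hC
    subst hC0
    simp only [Set.mem_empty_iff_false, Set.iUnion_of_empty, Set.iUnion_empty]
    exact quasiBound_empty G α (β - d₀)
end
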